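/- Let f : ℝⁿ → ℝ be convex and continuously differentiable with L₁-Lipschitz gradient, and u a standard Gaussian vector. Then for all x ∈ ℝⁿ and μ > 0, |f_μ(x) − f(x)| ≤ (μ²/2)·L₁·n, where f_μ(x) = E_u[f(x+μu)]. -/

import Mathlib

open MeasureTheory ProbabilityTheory

section AuxGaussianSmoothing

open Real Filter Set intervalIntegral


noncomputable section

lemma tendsto_F_cocompact : Tendsto (fun x : ℝ => x * Real.exp (-2⁻¹ * x ^ 2))
    (cocompact ℝ) (nhds 0) := by
  have h := tendsto_rpow_abs_mul_exp_neg_mul_sq_cocompact (by norm_num : (0:ℝ) < 2⁻¹) 1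
  rw [tendsto_zero_iff_norm_tendsto_zero]
  refine squeeze_zero (fun _ => norm_nonneg _) (fun x => ?_) h
  rw [Real.norm_eq_abs, abs_mul, abs_of_nonneg (Real.exp_pos _).le, Real.rpow_one]

lemma tendsto_g_cocompact : Tendsto (fun x : ℝ => Real.exp (-2⁻¹ * x ^ 2))
    (cocompact ℝ) (nhds 0) := by
  have h := tendsto_rpow_abs_mul_exp_neg_mul_sq_cocompact (by norm_num : (0:ℝ) < 2⁻¹) 0
  refine h.congr (fun x => ?_)
  rw [Real.rpow_zero, one_mul]

lemma hasDerivAt_g (x : ℝ) :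
    HasDerivAt (fun x : ℝ => Real.exp (-2⁻¹ * x ^ 2)) (-x * Real.exp (-2⁻¹ * x ^ 2)) x := by
  have h : HasDerivAt (fun x : ℝ => -2⁻¹ * x ^ 2) (-x) x := by
    have := (hasDerivAt_pow 2 x).const_mul (-2⁻¹ : ℝ)
    exact this.congr_deriv (by push_cast; ring)
  simpa [mul_comm] using h.exp

lemma integrable_sq_g : Integrable (fun x : ℝ => x ^ 2 * Real.exp (-2⁻¹ * x ^ 2)) := by
  have h := integrable_rpow_mul_exp_neg_mul_sq (by norm_num : (0:ℝ) < 2⁻¹)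
    (by norm_num : (-1:ℝ) < 2)
  have e : ∀ x : ℝ, x ^ (2:ℝ) = x ^ 2 := fun x => by
    rw [show (2:ℝ) = ((2:ℕ):ℝ) by norm_num, Real.rpow_natCast]
  simpa [e] using h

end
noncomputable section

lemma integrable_g : Integrable (fun x : ℝ => Real.exp (-2⁻¹ * x ^ 2)) :=
  integrable_exp_neg_mul_sq (by norm_num)

lemma integrable_mul_g : Integrable (fun x : ℝ => x * Real.exp (-2⁻¹ * x ^ 2)) :=
  integrable_mul_exp_neg_mul_sq (by norm_num)

lemma atTop_le_cocompact_real : (atTop : Filter ℝ) ≤ cocompact ℝ := by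
  rw [cocompact_eq_atBot_atTop]; exact le_sup_right

lemma atBot_le_cocompact_real : (atBot : Filter ℝ) ≤ cocompact ℝ := by
  rw [cocompact_eq_atBot_atTop]; exact le_sup_left

lemma tendsto_F_atTop : Tendsto (fun x : ℝ => -(x * Real.exp (-2⁻¹ * x ^ 2))) atTop (nhds 0) := by
  have h := (tendsto_F_cocompact.mono_left atTop_le_cocompact_real).neg
  rw [neg_zero] at h; exact h

lemma tendsto_F_atBot : Tendsto (fun x : ℝ => -(x * Real.exp (-2⁻¹ * x ^ 2))) atBot (nhds 0) := by
  have h := (tendsto_F_cocompact.mono_left atBot_le_cocompact_real).neg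
  rw [neg_zero] at h; exact h

lemma integral_sq_mul_g : ∫ x : ℝ, x ^ 2 * Real.exp (-2⁻¹ * x ^ 2) = Real.sqrt (2 * π) := by
  set φ : ℝ → ℝ := fun x => x ^ 2 * Real.exp (-2⁻¹ * x ^ 2) - Real.exp (-2⁻¹ * x ^ 2) with hφ
  have hD : ∀ x : ℝ, HasDerivAt (fun x : ℝ => -(x * Real.exp (-2⁻¹ * x ^ 2))) (φ x) x := by
    intro x
    have h := ((hasDerivAt_id x).mul (hasDerivAt_g x)).neg
    refine h.congr_deriv ?_
    simp [hφ]; ring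
  have hInt : Integrable φ := integrable_sq_g.sub integrable_g
  have h1 : ∫ x in Ioi (0:ℝ), φ x = 0 - -(0 * Real.exp (-2⁻¹ * 0 ^ 2)) :=
    integral_Ioi_of_hasDerivAt_of_tendsto' (fun x _ => hD x) hInt.integrableOn tendsto_F_atTop
  have h2 : ∫ x in Iic (0:ℝ), φ x = -(0 * Real.exp (-2⁻¹ * 0 ^ 2)) - 0 :=
    integral_Iic_of_hasDerivAt_of_tendsto' (fun x _ => hD x) hInt.integrableOn tendsto_F_atBot
  have h3 : ∫ x : ℝ, φ x = 0 := by
    rw [← integral_Iic_add_Ioi hInt.integrableOn hInt.integrableOn, h1, h2]; ring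
  have h4 := integral_sub integrable_sq_g integrable_g
  rw [show (fun x : ℝ => x ^ 2 * Real.exp (-2⁻¹ * x ^ 2) - Real.exp (-2⁻¹ * x ^ 2)) = φ from rfl,
    h3] at h4
  have h5 : ∫ x : ℝ, Real.exp (-2⁻¹ * x ^ 2) = Real.sqrt (2 * π) := by
    rw [integral_gaussian, show π / 2⁻¹ = 2 * π by ring]
  linarith [h4, h5]

lemma integral_mul_g : ∫ x : ℝ, x * Real.exp (-2⁻¹ * x ^ 2) = 0 := by
  set φ : ℝ → ℝ := fun x => x * Real.exp (-2⁻¹ * x ^ 2) with hφ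
  have hD : ∀ x : ℝ, HasDerivAt (fun x : ℝ => -Real.exp (-2⁻¹ * x ^ 2)) (φ x) x := by
    intro x
    have h := (hasDerivAt_g x).neg
    refine h.congr_deriv ?_
    simp [hφ]
  have hT : Tendsto (fun x : ℝ => -Real.exp (-2⁻¹ * x ^ 2)) atTop (nhds 0) := by
    have h := (tendsto_g_cocompact.mono_left atTop_le_cocompact_real).neg
    rw [neg_zero] at h; exact h
  have hB : Tendsto (fun x : ℝ => -Real.exp (-2⁻¹ * x ^ 2)) atBot (nhds 0) := by
    have h := (tendsto_g_cocompact.mono_left atBot_le_cocompact_real).neg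
    rw [neg_zero] at h; exact h
  have h1 : ∫ x in Ioi (0:ℝ), φ x = 0 - -Real.exp (-2⁻¹ * 0 ^ 2) :=
    integral_Ioi_of_hasDerivAt_of_tendsto' (fun x _ => hD x) integrable_mul_g.integrableOn hT
  have h2 : ∫ x in Iic (0:ℝ), φ x = -Real.exp (-2⁻¹ * 0 ^ 2) - 0 :=
    integral_Iic_of_hasDerivAt_of_tendsto' (fun x _ => hD x) integrable_mul_g.integrableOn hB
  rw [← integral_Iic_add_Ioi integrable_mul_g.integrableOn integrable_mul_g.integrableOn, h1, h2]
  ring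

end
noncomputable section

lemma gaussianPDFReal_std (x : ℝ) :
    gaussianPDFReal 0 1 x = (Real.sqrt (2 * π))⁻¹ * Real.exp (-2⁻¹ * x ^ 2) := by
  unfold gaussianPDFReal
  norm_num
  left
  ring

lemma gauss_smul_eq (h : ℝ → ℝ) :
    (fun x => (gaussianPDFReal 0 1 x).toNNReal • h x) =
      fun x => (Real.sqrt (2 * π))⁻¹ * (Real.exp (-2⁻¹ * x ^ 2) * h x) := by
  funext x
  rw [NNReal.smul_def, Real.coe_toNNReal _ (gaussianPDFReal_nonneg 0 1 x), gaussianPDFReal_std,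
    smul_eq_mul]
  ring

lemma gauss_integrable_iff (h : ℝ → ℝ) :
    Integrable h (gaussianReal 0 1) ↔
      Integrable (fun x => (Real.sqrt (2 * π))⁻¹ * (Real.exp (-2⁻¹ * x ^ 2) * h x)) := by
  rw [gaussianReal_of_var_ne_zero 0 one_ne_zero,
    show gaussianPDF 0 1 = fun x => ((gaussianPDFReal 0 1 x).toNNReal : ENNReal) from rfl,
    integrable_withDensity_iff_integrable_smul ((measurable_gaussianPDFReal 0 1).real_toNNReal),
    gauss_smul_eq]

lemma gauss_integral_eq (h : ℝ → ℝ) :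
    ∫ x, h x ∂(gaussianReal 0 1) =
      ∫ x, (Real.sqrt (2 * π))⁻¹ * (Real.exp (-2⁻¹ * x ^ 2) * h x) := by
  rw [gaussianReal_of_var_ne_zero 0 one_ne_zero,
    show gaussianPDF 0 1 = fun x => ((gaussianPDFReal 0 1 x).toNNReal : ENNReal) from rfl,
    integral_withDensity_eq_integral_smul ((measurable_gaussianPDFReal 0 1).real_toNNReal),
    gauss_smul_eq]

lemma integrable_id_gauss : Integrable (fun x : ℝ => x) (gaussianReal 0 1) := by
  rw [gauss_integrable_iff]
  simp only [mul_comm (Real.exp _)]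
  exact integrable_mul_g.const_mul _

lemma integral_id_gauss : ∫ x, x ∂(gaussianReal 0 1) = 0 := by
  rw [gauss_integral_eq, MeasureTheory.integral_const_mul]
  simp only [mul_comm (Real.exp _)]
  rw [integral_mul_g, mul_zero]

lemma integrable_sq_gauss : Integrable (fun x : ℝ => x ^ 2) (gaussianReal 0 1) := by
  rw [gauss_integrable_iff]
  refine Integrable.const_mul ?_ _
  simp only [mul_comm (Real.exp _)]
  exact integrable_sq_g

lemma integral_sq_gauss : ∫ x, x ^ 2 ∂(gaussianReal 0 1) = 1 := by
  rw [gauss_integral_eq, MeasureTheory.integral_const_mul]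
  simp only [mul_comm (Real.exp _)]
  rw [integral_sq_mul_g, inv_mul_cancel₀]
  positivity

end
open RealInnerProductSpace in
lemma grad_bounds {n : ℕ} (f : EuclideanSpace ℝ (Fin n) → ℝ) (L₁ : ℝ)
    (hf : ConvexOn ℝ Set.univ f) (hdiff : Differentiable ℝ f)
    (hlip : ∀ x y, ‖gradient f x - gradient f y‖ ≤ L₁ * ‖x - y‖)
    (x v : EuclideanSpace ℝ (Fin n)) :
    0 ≤ f (x + v) - f x - ⟪gradient f x, v⟫ ∧
      f (x + v) - f x - ⟪gradient f x, v⟫ ≤ L₁ / 2 * ‖v‖ ^ 2 := by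
  set φ : ℝ → ℝ := fun t => f (x + t • v) with hφdef
  have hφ : ∀ t : ℝ, HasDerivAt φ ⟪gradient f (x + t • v), v⟫ t := by
    intro t
    have h1 : HasDerivAt (fun t : ℝ => x + t • v) v t := by
      simpa using ((hasDerivAt_id t).smul_const v).const_add x
    have h2 := (hdiff (x + t • v)).hasGradientAt.hasFDerivAt.comp_hasDerivAt t h1
    simp [InnerProductSpace.toDual_apply_apply] at h2 ⊢
    exact h2
  have hφ0 : φ 0 = f x := by simp [hφdef]
  have hφ1 : φ 1 = f (x + v) := by simp [hφdef]
  constructor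
  · -- convexity lower bound
    have hconv : ConvexOn ℝ Set.univ φ := by
      have h := hf.comp_affineMap (AffineMap.lineMap x (x + v))
      have e : (f ∘ (AffineMap.lineMap x (x + v) : ℝ →ᵃ[ℝ] EuclideanSpace ℝ (Fin n))) = φ := by
        funext t
        simp [hφdef, AffineMap.lineMap_apply, add_comm]
      rw [Set.preimage_univ, e] at h
      exact h
    have h := hconv.le_slope_of_hasDerivAt (Set.mem_univ (0:ℝ)) (Set.mem_univ 1) one_pos (hφ 0)
    rw [slope_def_field] at h
    simp only [sub_zero, div_one, hφ0, hφ1] at h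
    have hx0 : x + (0:ℝ) • v = x := by simp
    rw [hx0] at h
    linarith
  · -- descent upper bound
    have hcontg : Continuous fun y : EuclideanSpace ℝ (Fin n) => gradient f y := by
      refine LipschitzWith.continuous (K := Real.toNNReal L₁)
        (LipschitzWith.of_dist_le_mul fun a b => ?_)
      rw [dist_eq_norm, dist_eq_norm]
      exact le_trans (hlip a b)
        (mul_le_mul_of_nonneg_right (Real.le_coe_toNNReal L₁) (norm_nonneg _))
    have hcont : Continuous fun t : ℝ => ⟪gradient f (x + t • v), v⟫ :=
      Continuous.inner
        (hcontg.comp (continuous_const.add (continuous_id.smul continuous_const)))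
        continuous_const
    have hFTC : ∫ t in (0:ℝ)..1, ⟪gradient f (x + t • v), v⟫ = φ 1 - φ 0 :=
      intervalIntegral.integral_eq_sub_of_hasDerivAt (fun t _ => hφ t)
        (hcont.intervalIntegrable 0 1)
    have hmono : ∫ t in (0:ℝ)..1, ⟪gradient f (x + t • v), v⟫ ≤
        ∫ t in (0:ℝ)..1, (⟪gradient f x, v⟫ + L₁ * ‖v‖ ^ 2 * t) := by
      refine intervalIntegral.integral_mono_on zero_le_one (hcont.intervalIntegrable 0 1)
        ((continuous_const.add ((continuous_const).mul continuous_id)).intervalIntegrable 0 1)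
        fun t ht => ?_
      have h2 : ‖gradient f (x + t • v) - gradient f x‖ ≤ L₁ * (t * ‖v‖) := by
        have h := hlip (x + t • v) x
        rw [add_sub_cancel_left, norm_smul, Real.norm_eq_abs,
          abs_of_nonneg ht.1] at h
        exact h
      have key : ⟪gradient f (x + t • v), v⟫ - ⟪gradient f x, v⟫ ≤ L₁ * ‖v‖ ^ 2 * t := by
        rw [← inner_sub_left]
        calc ⟪gradient f (x + t • v) - gradient f x, v⟫
            ≤ ‖gradient f (x + t • v) - gradient f x‖ * ‖v‖ := real_inner_le_norm _ _
          _ ≤ (L₁ * (t * ‖v‖)) * ‖v‖ := mul_le_mul_of_nonneg_right h2 (norm_nonneg v)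
          _ = L₁ * ‖v‖ ^ 2 * t := by ring
      linarith
    have hrhs : ∫ t in (0:ℝ)..1, (⟪gradient f x, v⟫ + L₁ * ‖v‖ ^ 2 * t) =
        ⟪gradient f x, v⟫ + L₁ / 2 * ‖v‖ ^ 2 := by
      have hi : IntervalIntegrable (fun t : ℝ => L₁ * ‖v‖ ^ 2 * t) MeasureTheory.volume 0 1 := by
        apply Continuous.intervalIntegrable; continuity
      rw [intervalIntegral.integral_add (intervalIntegrable_const) hi,
        intervalIntegral.integral_const, intervalIntegral.integral_const_mul, integral_id]
      norm_num
      ring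
    rw [hφ0, hφ1] at hFTC
    linarith

open RealInnerProductSpace in
theorem gaussian_smoothing_error_bound_aux {n : ℕ} {Ω : Type*} [MeasurableSpace Ω]
    (P : Measure Ω) [IsProbabilityMeasure P]
    (u : Ω → EuclideanSpace ℝ (Fin n))
    (hmeas : ∀ i, Measurable fun ω => u ω i)
    (hlaw : ∀ i, Measure.map (fun ω => u ω i) P = gaussianReal 0 1)
    (hindep : iIndepFun (fun i ω => u ω i) P)
    (f : EuclideanSpace ℝ (Fin n) → ℝ) (L₁ : ℝ)
    (hf : ConvexOn ℝ Set.univ f) (hdiff : Differentiable ℝ f)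
    (hlip : ∀ x y, ‖gradient f x - gradient f y‖ ≤ L₁ * ‖x - y‖)
    (μ : ℝ) (hμ : 0 < μ) (x : EuclideanSpace ℝ (Fin n))
    (hint : Integrable (fun ω => f (x + μ • u ω)) P) :
    |(∫ ω, f (x + μ • u ω) ∂P) - f x| ≤ μ ^ 2 / 2 * L₁ * n := by
  classical
  set g := gradient f x with hg
  have hXint : ∀ i, Integrable (fun ω => u ω i) P := by
    intro i
    have h0 : Integrable (fun y : ℝ => y) (Measure.map (fun ω => u ω i) P) := by
      rw [hlaw i]; exact integrable_id_gauss
    exact (integrable_map_measure aestronglyMeasurable_id (hmeas i).aemeasurable).mp h0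
  have hXzero : ∀ i, ∫ ω, u ω i ∂P = 0 := by
    intro i
    have h0 := integral_map (hmeas i).aemeasurable
      (aestronglyMeasurable_id (μ := Measure.map (fun ω => u ω i) P) (α := ℝ))
    simp only [id_eq] at h0
    rw [hlaw i, integral_id_gauss] at h0
    exact h0.symm
  have hX2int : ∀ i, Integrable (fun ω => (u ω i) ^ 2) P := by
    intro i
    have h0 : Integrable (fun y : ℝ => y ^ 2) (Measure.map (fun ω => u ω i) P) := by
      rw [hlaw i]; exact integrable_sq_gauss
    exact (integrable_map_measure (measurable_id.pow_const 2).aestronglyMeasurable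
      (hmeas i).aemeasurable).mp h0
  have hX2one : ∀ i, ∫ ω, (u ω i) ^ 2 ∂P = 1 := by
    intro i
    have h0 := integral_map (φ := fun ω => u ω i) (μ := P) (hmeas i).aemeasurable
      (f := fun y : ℝ => y ^ 2) (measurable_id.pow_const 2).aestronglyMeasurable
    rw [← h0, hlaw i, integral_sq_gauss]
  have hinner : ∀ ω, ⟪g, μ • u ω⟫ = ∑ i, (μ * g i) * u ω i := by
    intro ω
    rw [real_inner_smul_right, PiLp.inner_apply, Finset.mul_sum]
    refine Finset.sum_congr rfl fun i _ => ?_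
    simp [RCLike.inner_apply]
    ring
  have hinner_int : Integrable (fun ω => ⟪g, μ • u ω⟫) P := by
    simp only [hinner]
    exact integrable_finset_sum _ fun i _ => (hXint i).const_mul _
  have hinner_zero : ∫ ω, ⟪g, μ • u ω⟫ ∂P = 0 := by
    simp only [hinner]
    rw [integral_finset_sum _ fun i _ => (hXint i).const_mul _]
    simp only [MeasureTheory.integral_const_mul, hXzero, mul_zero, Finset.sum_const_zero]
  have hnorm : ∀ ω, ‖μ • u ω‖ ^ 2 = μ ^ 2 * ∑ i, (u ω i) ^ 2 := by
    intro ω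
    rw [norm_smul, EuclideanSpace.norm_eq, mul_pow,
      Real.sq_sqrt (by positivity : (0:ℝ) ≤ ∑ i, ‖u ω i‖ ^ 2)]
    simp [Real.norm_eq_abs, sq_abs]
  have hnorm_int : Integrable (fun ω => ‖μ • u ω‖ ^ 2) P := by
    simp only [hnorm]
    exact (integrable_finset_sum _ fun i _ => hX2int i).const_mul _
  have hnorm_val : ∫ ω, ‖μ • u ω‖ ^ 2 ∂P = μ ^ 2 * n := by
    simp only [hnorm]
    rw [MeasureTheory.integral_const_mul, integral_finset_sum _ fun i _ => hX2int i]
    simp [hX2one]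
  have hb := fun ω => grad_bounds f L₁ hf hdiff hlip x (μ • u ω)
  have hIh : Integrable (fun ω => f (x + μ • u ω) - f x - ⟪g, μ • u ω⟫) P :=
    (hint.sub (integrable_const (f x))).sub hinner_int
  have h0le : 0 ≤ ∫ ω, (f (x + μ • u ω) - f x - ⟪g, μ • u ω⟫) ∂P :=
    integral_nonneg fun ω => (hb ω).1
  have hle : ∫ ω, (f (x + μ • u ω) - f x - ⟪g, μ • u ω⟫) ∂P ≤
      ∫ ω, L₁ / 2 * ‖μ • u ω‖ ^ 2 ∂P :=
    integral_mono hIh (hnorm_int.const_mul _) fun ω => (hb ω).2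
  have hA : Integrable (fun ω => f (x + μ • u ω) - f x) P := hint.sub (integrable_const (f x))
  have hval : ∫ ω, (f (x + μ • u ω) - f x - ⟪g, μ • u ω⟫) ∂P =
      (∫ ω, f (x + μ • u ω) ∂P) - f x := by
    rw [integral_sub hA hinner_int,
      integral_sub hint (integrable_const (f x)), hinner_zero, MeasureTheory.integral_const]
    simp
  have hrval : ∫ ω, L₁ / 2 * ‖μ • u ω‖ ^ 2 ∂P = L₁ / 2 * (μ ^ 2 * n) := by
    rw [MeasureTheory.integral_const_mul, hnorm_val]
  rw [hval] at h0le hle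
  rw [hrval] at hle
  rw [abs_of_nonneg h0le]
  nlinarith [hle]

end AuxGaussianSmoothing

theorem gaussian_smoothing_error_bound {n : ℕ} {Ω : Type*} [MeasurableSpace Ω]
    (P : Measure Ω) [IsProbabilityMeasure P]
    (u : Ω → EuclideanSpace ℝ (Fin n))
    (hmeas : ∀ i, Measurable fun ω => u ω i)
    (hlaw : ∀ i, Measure.map (fun ω => u ω i) P = gaussianReal 0 1)
    (hindep : iIndepFun (fun i ω => u ω i) P)
    (f : EuclideanSpace ℝ (Fin n) → ℝ) (L₁ : ℝ)
    (hf : ConvexOn ℝ Set.univ f) (hdiff : Differentiable ℝ f)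
    (hlip : ∀ x y, ‖gradient f x - gradient f y‖ ≤ L₁ * ‖x - y‖)
    (μ : ℝ) (hμ : 0 < μ) (x : EuclideanSpace ℝ (Fin n))
    (hint : Integrable (fun ω => f (x + μ • u ω)) P) :
    |(∫ ω, f (x + μ • u ω) ∂P) - f x| ≤ μ ^ 2 / 2 * L₁ * n := by
  exact gaussian_smoothing_error_bound_aux P u hmeas hlaw hindep f L₁ hf hdiff hlip μ hμ x hint
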